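/- Moment-to-domination dichotomy: let Λ ≥ 0 be a random variable (indexed by N) and suppose that for every fixed r ∈ ℕ, E[Λ^{4r}] ≺ A^{2r} + E[Λ^{2r}] B^{2r} for deterministic nonnegative A = A_N, B = B_N. Then Λ ≺ A^{1/2} + B, i.e. for every ε, D > 0, P(Λ > N^ε(A^{1/2} + B)) ≤ C N^{-D}. -/

import Mathlib

open MeasureTheory

open ENNReal

/-- Cauchy–Schwarz: on a probability space, `(∫⁻ f)² ≤ ∫⁻ f²`. -/
lemma sq_lintegral_le_lintegral_sq {Ω : Type*} [MeasurableSpace Ω] (μ : Measure Ω)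
    [IsProbabilityMeasure μ] (f : Ω → ℝ≥0∞) (hf : AEMeasurable f μ) :
    (∫⁻ ω, f ω ∂μ) ^ 2 ≤ ∫⁻ ω, (f ω) ^ 2 ∂μ := by
  have hpq : Real.HolderConjugate 2 2 := by
    constructor <;> norm_num
  have h := ENNReal.lintegral_mul_le_Lp_mul_Lq μ hpq hf aemeasurable_const (g := fun _ => 1)
  simp only [Pi.mul_apply, mul_one, lintegral_one, measure_univ, ENNReal.one_rpow,
    one_mul] at h
  have h2 : ∀ x : ℝ≥0∞, x ^ (2:ℝ) = x ^ 2 := fun x => by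
    rw [show (2:ℝ) = ((2:ℕ):ℝ) by norm_num, ENNReal.rpow_natCast]
  simp only [h2] at h
  calc (∫⁻ ω, f ω ∂μ) ^ 2 ≤ ((∫⁻ ω, f ω ^ 2 ∂μ) ^ (1/2:ℝ)) ^ 2 := by
        exact pow_le_pow_left' h 2
    _ = ∫⁻ ω, f ω ^ 2 ∂μ := by
        rw [← h2, ← ENNReal.rpow_mul]; norm_num

set_option maxHeartbeats 1000000 in
/-- **Moment-to-domination dichotomy.** Let `Λ_N ≥ 0` be random variables with
finite moments, and suppose that for every fixed `r ∈ ℕ` and every `ε > 0`,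
for all large `N`,
`E[Λ^{4r}] ≤ N^ε (A^{2r} + E[Λ^{2r}] B^{2r})`
with `A, B` deterministic nonnegative. Then `Λ ≺ A^{1/2} + B`: for every
`ε, D > 0` there is `C` with `ℙ(Λ_N > N^ε(A_N^{1/2} + B_N)) ≤ C N^{-D}` for
all `N ≥ 1`. -/
theorem moment_dichotomy {Ω : Type*} [MeasurableSpace Ω] (μ : Measure Ω)
    [IsProbabilityMeasure μ]
    (Lam : ℕ → Ω → ℝ) (A B : ℕ → ℝ)
    (hLam : ∀ N ω, 0 ≤ Lam N ω) (hA : ∀ N, 0 ≤ A N) (hB : ∀ N, 0 ≤ B N)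
    (hmeas : ∀ N, Measurable (Lam N))
    (hfin : ∀ r N : ℕ, ∫⁻ ω, ENNReal.ofReal (Lam N ω ^ r) ∂μ < ⊤)
    (hmom : ∀ r : ℕ, ∀ ε > (0 : ℝ), ∃ N₀ : ℕ, ∀ N ≥ N₀,
      ∫⁻ ω, ENNReal.ofReal (Lam N ω ^ (4 * r)) ∂μ
        ≤ ENNReal.ofReal ((N : ℝ) ^ ε) *
          (ENNReal.ofReal (A N ^ (2 * r)) +
            (∫⁻ ω, ENNReal.ofReal (Lam N ω ^ (2 * r)) ∂μ) * ENNReal.ofReal (B N ^ (2 * r)))) :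
    ∀ ε > (0 : ℝ), ∀ D > (0 : ℝ), ∃ C : ℝ, ∀ N : ℕ, 1 ≤ N →
      μ {ω | Lam N ω > (N : ℝ) ^ ε * (Real.sqrt (A N) + B N)}
        ≤ ENNReal.ofReal (C * (N : ℝ) ^ (-D)) := by
  intro ε hε D hD
  -- choose r with D + 2ε ≤ 4rε and r ≥ 1
  obtain ⟨r, hr1, hrε⟩ : ∃ r : ℕ, 1 ≤ r ∧ D + 2*ε ≤ 4*r*ε := by
    refine ⟨⌈(D + 2*ε)/(4*ε)⌉₊ + 1, Nat.le_add_left 1 _, ?_⟩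
    have h4ε : (0:ℝ) < 4*ε := by linarith
    have h1 : (D + 2*ε)/(4*ε) ≤ ((⌈(D + 2*ε)/(4*ε)⌉₊ + 1 : ℕ):ℝ) := by
      push_cast
      linarith [Nat.le_ceil ((D + 2*ε)/(4*ε))]
    calc D + 2*ε = ((D + 2*ε)/(4*ε)) * (4*ε) := by field_simp
      _ ≤ ((⌈(D + 2*ε)/(4*ε)⌉₊ + 1 : ℕ):ℝ) * (4*ε) := mul_le_mul_of_nonneg_right h1 h4ε.le
      _ = 4*((⌈(D + 2*ε)/(4*ε)⌉₊ + 1 : ℕ):ℝ)*ε := by ring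
  obtain ⟨N₀, hN₀⟩ := hmom r ε hε
  refine ⟨(N₀:ℝ)^D + 4, ?_⟩
  intro N hN1
  have hNpos : (1:ℝ) ≤ (N:ℝ) := by exact_mod_cast hN1
  -- key estimate for N ≥ N₀
  have key : N₀ ≤ N → μ {ω | Lam N ω > (N : ℝ) ^ ε * (Real.sqrt (A N) + B N)}
      ≤ ENNReal.ofReal (4 * (N:ℝ)^(-D)) := by
    intro hNN₀
    set a := A N with ha
    set b := B N with hb
    set s : ℝ := Real.sqrt a + b with hs
    set K : ℝ := (N:ℝ)^ε with hK
    have hK1 : 1 ≤ K := Real.one_le_rpow hNpos hε.le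
    have hK0 : 0 ≤ K := by linarith
    have hs0 : 0 ≤ s := add_nonneg (Real.sqrt_nonneg _) (hB N)
    set M4 : ℝ≥0∞ := ∫⁻ ω, ENNReal.ofReal (Lam N ω ^ (4*r)) ∂μ with hM4def
    set M2 : ℝ≥0∞ := ∫⁻ ω, ENNReal.ofReal (Lam N ω ^ (2*r)) ∂μ with hM2def
    have hM4fin : M4 ≠ ⊤ := (hfin (4*r) N).ne
    have hM2fin : M2 ≠ ⊤ := (hfin (2*r) N).ne
    set m4 : ℝ := M4.toReal with hm4def
    set m2 : ℝ := M2.toReal with hm2def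
    have hm40 : 0 ≤ m4 := ENNReal.toReal_nonneg
    have hm20 : 0 ≤ m2 := ENNReal.toReal_nonneg
    -- Step A : moment bound in ℝ
    have stepA : m4 ≤ K * (a^(2*r) + m2 * b^(2*r)) := by
      have h := hN₀ N hNN₀
      have hRHS : (ENNReal.ofReal K * (ENNReal.ofReal (a ^ (2*r)) + M2 * ENNReal.ofReal (b ^ (2*r)))) ≠ ⊤ := by
        apply ENNReal.mul_ne_top ENNReal.ofReal_ne_top
        apply ENNReal.add_ne_top.mpr
        exact ⟨ENNReal.ofReal_ne_top, ENNReal.mul_ne_top hM2fin ENNReal.ofReal_ne_top⟩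
      have := ENNReal.toReal_mono hRHS h
      rw [ENNReal.toReal_mul, ENNReal.toReal_add ENNReal.ofReal_ne_top
          (ENNReal.mul_ne_top hM2fin ENNReal.ofReal_ne_top), ENNReal.toReal_mul,
          ENNReal.toReal_ofReal hK0, ENNReal.toReal_ofReal (pow_nonneg (hA N) _),
          ENNReal.toReal_ofReal (pow_nonneg (hB N) _)] at this
      exact this
    -- Step B : Cauchy–Schwarz m2² ≤ m4
    have stepB : m2^2 ≤ m4 := by
      have hfm : AEMeasurable (fun ω => ENNReal.ofReal (Lam N ω ^ (2*r))) μ :=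
        (((hmeas N).pow_const _).ennreal_ofReal).aemeasurable
      have h := sq_lintegral_le_lintegral_sq μ _ hfm
      have heq : ∀ ω, (ENNReal.ofReal (Lam N ω ^ (2*r)))^2 = ENNReal.ofReal (Lam N ω ^ (4*r)) := by
        intro ω
        rw [sq, ← ENNReal.ofReal_mul (pow_nonneg (hLam N ω) _), ← pow_add]
        ring_nf
      simp only [heq] at h
      have h' : M2^2 ≤ M4 := h
      calc m2^2 = (M2^2).toReal := by rw [ENNReal.toReal_pow]
        _ ≤ M4.toReal := ENNReal.toReal_mono hM4fin h'
    -- Step C : Young + absorption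
    have stepC : m4 ≤ 4 * K^2 * s^(4*r) := by
      have young : K * (m2 * b^(2*r)) ≤ m2^2/2 + (K * b^(2*r))^2/2 := by
        nlinarith [sq_nonneg (m2 - K * b^(2*r))]
      have hb4 : (K * b^(2*r))^2 = K^2 * b^(4*r) := by
        rw [mul_pow, ← pow_mul]; ring_nf
      have habs : m4 ≤ 2 * K * a^(2*r) + K^2 * b^(4*r) := by
        nlinarith [stepB, stepA]
      have hsqrt : (Real.sqrt a)^(4*r) = a^(2*r) := by
        rw [show 4*r = 2*(2*r) by ring, pow_mul, Real.sq_sqrt (hA N)]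
      have h1 : a^(2*r) ≤ s^(4*r) := by
        rw [← hsqrt]
        exact pow_le_pow_left₀ (Real.sqrt_nonneg _) (by simp [hs, hB N]; exact hB N) _
      have h2 : b^(4*r) ≤ s^(4*r) := by
        apply pow_le_pow_left₀ (hB N)
        simp [hs, Real.sqrt_nonneg]
        exact le_add_of_nonneg_left (Real.sqrt_nonneg _)
      have hsp : 0 ≤ s^(4*r) := pow_nonneg hs0 _
      have t1 : 2*K*a^(2*r) ≤ 2*K^2*s^(4*r) := by
        have h2K : 2*K ≤ 2*K^2 := by nlinarith
        have := mul_le_mul h2K h1 (pow_nonneg (hA N) _) (by nlinarith)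
        linarith
      have t2 : K^2*b^(4*r) ≤ K^2*s^(4*r) := by
        exact mul_le_mul_of_nonneg_left h2 (sq_nonneg K)
      nlinarith [mul_nonneg (sq_nonneg K) hsp]
    -- Case split on s
    rcases eq_or_lt_of_le hs0 with hs0' | hspos
    · -- s = 0 : then a = 0 and b = 0, so m4 = 0 and Λ = 0 a.e.
      have hs00 : s = 0 := hs0'.symm
      have hm4z : m4 = 0 := by
        have hz : s^(4*r) = 0 := by rw [hs00]; exact zero_pow (by positivity)
        nlinarith [stepC]
      have hM4z : M4 = 0 := by
        have := ENNReal.toReal_eq_zero_iff M4 |>.mp hm4z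
        tauto
      have hae : ∀ᵐ ω ∂μ, ENNReal.ofReal (Lam N ω ^ (4*r)) = 0 := by
        have := (lintegral_eq_zero_iff (((hmeas N).pow_const (4*r)).ennreal_ofReal)).mp hM4z
        filter_upwards [this] with ω hω using hω
      have hnull : μ {ω | Lam N ω > K * s} = 0 := by
        have hsub0 : {ω | Lam N ω > K * s} ⊆ {ω | ¬ ENNReal.ofReal (Lam N ω ^ (4*r)) = 0} := by
          intro ω hω
          simp only [Set.mem_setOf_eq, hs00, mul_zero] at hω ⊢
          have hp : 0 < Lam N ω ^ (4*r) := pow_pos hω _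
          simp [ENNReal.ofReal_eq_zero, not_le, hp]
        exact measure_mono_null hsub0 (ae_iff.mp hae)
      rw [hnull]
      exact zero_le
    · -- s > 0 : Markov
      have htpos : 0 < K * s := mul_pos (by linarith) hspos
      have ht4 : 0 < (K*s)^(4*r) := pow_pos htpos _
      have hsub : {ω | Lam N ω > K * s} ⊆
          {ω | ENNReal.ofReal ((K*s)^(4*r)) ≤ ENNReal.ofReal (Lam N ω ^ (4*r))} := by
        intro ω hω
        simp only [Set.mem_setOf_eq] at hω ⊢
        exact ENNReal.ofReal_le_ofReal (pow_le_pow_left₀ htpos.le hω.le _)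
      have hmark := meas_ge_le_lintegral_div (μ := μ)
        (f := fun ω => ENNReal.ofReal (Lam N ω ^ (4*r)))
        (((hmeas N).pow_const (4*r)).ennreal_ofReal).aemeasurable
        (ε := ENNReal.ofReal ((K*s)^(4*r)))
        (by simp [ENNReal.ofReal_eq_zero, not_le, ht4]) ENNReal.ofReal_ne_top
      have hfrac : M4 / ENNReal.ofReal ((K*s)^(4*r)) ≤ ENNReal.ofReal (4 * (N:ℝ)^(-D)) := by
        rw [show M4 = ENNReal.ofReal m4 from (ENNReal.ofReal_toReal hM4fin).symm,
          ← ENNReal.ofReal_div_of_pos ht4]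
        apply ENNReal.ofReal_le_ofReal
        -- real estimate : m4 / (K s)^{4r} ≤ 4 N^{-D}
        have hKs : (K*s)^(4*r) = K^(4*r) * s^(4*r) := mul_pow _ _ _
        have hd1 : m4 / (K*s)^(4*r) ≤ 4 * K^2 / K^(4*r) := by
          rw [div_le_div_iff₀ ht4 (pow_pos (by linarith : (0:ℝ) < K) _), hKs]
          calc m4 * K^(4*r) ≤ (4*K^2*s^(4*r)) * K^(4*r) :=
                mul_le_mul_of_nonneg_right stepC (pow_nonneg (by linarith) _)
            _ = 4*K^2 * (K^(4*r) * s^(4*r)) := by ring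
        have hKpow : K^(4*r) = (N:ℝ)^(ε*(4*(r:ℝ))) := by
          rw [hK, ← Real.rpow_natCast ((N:ℝ)^ε) (4*r), ← Real.rpow_mul (by linarith)]
          congr 1
          push_cast
          ring
        have hd2 : 4 * K^2 / K^(4*r) = 4 * (N:ℝ)^(ε*2 - ε*(4*(r:ℝ))) := by
          rw [hKpow, hK, ← Real.rpow_natCast ((N:ℝ)^ε) 2, ← Real.rpow_mul (by linarith),
            Real.rpow_sub (by linarith)]
          push_cast
          ring
        have hexp : ε*2 - ε*(4*(r:ℝ)) ≤ -D := by
          have : (4:ℝ)*r*ε = ε*(4*r) := by ring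
          linarith
        refine hd1.trans ?_
        rw [hd2]
        have := Real.rpow_le_rpow_of_exponent_le hNpos hexp
        linarith
      calc μ {ω | Lam N ω > K * s} ≤ μ {ω | ENNReal.ofReal ((K*s)^(4*r)) ≤ ENNReal.ofReal (Lam N ω ^ (4*r))} :=
            measure_mono hsub
        _ ≤ M4 / ENNReal.ofReal ((K*s)^(4*r)) := hmark
        _ ≤ ENNReal.ofReal (4 * (N:ℝ)^(-D)) := hfrac
  -- assemble
  by_cases hcase : N₀ ≤ N
  · refine (key hcase).trans (ENNReal.ofReal_le_ofReal ?_)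
    have hND : 0 ≤ (N:ℝ)^(-D) := Real.rpow_nonneg (by positivity) _
    have h4 : (4:ℝ) ≤ (N₀:ℝ)^D + 4 := by
      have := Real.rpow_nonneg (Nat.cast_nonneg N₀ : (0:ℝ) ≤ (N₀:ℝ)) D
      linarith
    nlinarith
  · push_neg at hcase
    have hmu1 : μ {ω | Lam N ω > (N : ℝ) ^ ε * (Real.sqrt (A N) + B N)} ≤ 1 := prob_le_one
    refine hmu1.trans ?_
    rw [show (1:ℝ≥0∞) = ENNReal.ofReal 1 by simp]
    apply ENNReal.ofReal_le_ofReal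
    have h1 : (N:ℝ)^D ≤ (N₀:ℝ)^D :=
      Real.rpow_le_rpow (by positivity) (by exact_mod_cast hcase.le) hD.le
    have h2 : (N:ℝ)^D * (N:ℝ)^(-D) = 1 := by
      rw [← Real.rpow_add (by positivity)]; simp
    have hND : 0 ≤ (N:ℝ)^(-D) := Real.rpow_nonneg (by positivity) _
    nlinarith [mul_le_mul_of_nonneg_right h1 hND]
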